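/- arXiv:2206.01481 — 5 statements merged into one kernel-verified Lean document; each statement's English description precedes it below -/
import Mathlib

section
/- Let c0, c1, c2 : ℝ → ℂ be continuous and suppose that for all z on the unit circle and all t ≥ 0, Re(conj(c0(t))·z + c1(t) + c2(t)·z) ≤ 0. Then the closed unit disc is forward invariant for the ODE z' = c0(t) + c1(t)·z + c2(t)·z², i.e., any solution with |z(0)| ≤ 1 satisfies |z(t)| ≤ 1 for all t ≥ 0. -/
open Complex Set

lemma riccati_re_identity (a b c w : ℂ) (r : ℝ) (hw : w.re^2 + w.im^2 = 1) :
    ((starRingEnd ℂ) ((r:ℂ) * w) * (a + b * ((r:ℂ)*w) + c * ((r:ℂ)*w)^2)).re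
      = r * ((starRingEnd ℂ) a * w + b + c * w).re
        + (r^2 - r) * b.re + (r^3 - r) * (c * w).re := by
  simp only [map_mul, Complex.conj_ofReal, pow_two, Complex.mul_re, Complex.mul_im,
    Complex.add_re, Complex.add_im, Complex.conj_re, Complex.conj_im,
    Complex.ofReal_re, Complex.ofReal_im]
  ring_nf
  linear_combination (r^2 * b.re + r^3 * (c.re * w.re - c.im * w.im)) * hw

lemma riccati_pointwise (a b c z : ℂ) (M : ℝ)
    (hM1 : ‖b‖ ≤ M) (hM2 : ‖c‖ ≤ M)
    (hineq : ∀ w : ℂ, ‖w‖ = 1 →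
      ((starRingEnd ℂ) a * w + b + c * w).re ≤ 0)
    (h1 : 1 ≤ Complex.normSq z) (h4 : Complex.normSq z ≤ 4) :
    2 * ((starRingEnd ℂ) z * (a + b * z + c * z^2)).re
      ≤ 16 * M * (Complex.normSq z - 1) := by
  set r : ℝ := ‖z‖ with hr
  have hr0 : 0 ≤ r := norm_nonneg z
  have hsq : r ^ 2 = Complex.normSq z := Complex.sq_norm z
  have hr1 : 1 ≤ r := by nlinarith
  have hr2 : r ≤ 2 := by nlinarith
  have hrne : (r:ℂ) ≠ 0 := by
    simp only [ne_eq, Complex.ofReal_eq_zero]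
    positivity
  set w : ℂ := z / (r:ℂ) with hwdef
  have hzw : z = (r:ℂ) * w := by
    rw [hwdef, mul_div_assoc', mul_div_right_comm, div_self hrne, one_mul]
  have habsw : ‖w‖ = 1 := by
    rw [hwdef, norm_div, Complex.norm_real, Real.norm_of_nonneg hr0, div_self]
    positivity
  have hw : w.re^2 + w.im^2 = 1 := by
    have h := Complex.sq_norm w
    rw [habsw] at h
    simpa [Complex.normSq_apply, sq] using h.symm
  have hid := riccati_re_identity a b c w r hw
  rw [hzw, hid]
  have hbd := hineq w habsw
  have hbre : b.re ≤ M := le_trans (Complex.re_le_norm b) hM1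
  have hcw : (c * w).re ≤ M := by
    refine le_trans (Complex.re_le_norm _) ?_
    rw [norm_mul, habsw, mul_one]; exact hM2
  have hM0 : 0 ≤ M := le_trans (norm_nonneg b) hM1
  have hns : Complex.normSq ((r:ℂ) * w) = r^2 := by rw [← hzw]; exact hsq.symm
  rw [hns]
  nlinarith [mul_le_mul_of_nonneg_left hbre (by nlinarith : (0:ℝ) ≤ r^2 - r),
    mul_le_mul_of_nonneg_left hcw (by nlinarith : (0:ℝ) ≤ r^3 - r),
    mul_nonpos_of_nonneg_of_nonpos hr0 hbd,
    mul_nonneg hM0 (by nlinarith : (0:ℝ) ≤ r^2 - 1)]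

theorem riccati_disc_forward_invariant
    (c0 c1 c2 : ℝ → ℂ)
    (hc0 : Continuous c0) (hc1 : Continuous c1) (hc2 : Continuous c2)
    (hineq : ∀ (w : ℂ) (t : ℝ), ‖w‖ = 1 → 0 ≤ t →
      ((starRingEnd ℂ) (c0 t) * w + c1 t + c2 t * w).re ≤ 0)
    (z : ℝ → ℂ)
    (hz : ∀ t, HasDerivAt z (c0 t + c1 t * z t + c2 t * (z t) ^ 2) t)
    (h0 : ‖z 0‖ ≤ 1) :
    ∀ t, 0 ≤ t → ‖z t‖ ≤ 1 := by
  intro b hb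
  by_contra hgt
  push_neg at hgt
  set v : ℝ → ℂ := fun t => c0 t + c1 t * z t + c2 t * (z t) ^ 2 with hvdef
  set f : ℝ → ℝ := fun t => Complex.normSq (z t) with hfdef
  set F' : ℝ → ℝ := fun t => 2 * ((starRingEnd ℂ) (z t) * v t).re with hF'def
  have hzd : Differentiable ℝ z := fun t => (hz t).differentiableAt
  have hzc : Continuous z := hzd.continuous
  have hfc : Continuous f := Complex.continuous_normSq.comp hzc
  have hf' : ∀ t, HasDerivAt f (F' t) t := by
    intro t
    have hre : HasDerivAt (fun t => (z t).re) (v t).re t :=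
      Complex.reCLM.hasFDerivAt.comp_hasDerivAt t (hz t)
    have him : HasDerivAt (fun t => (z t).im) (v t).im t :=
      Complex.imCLM.hasFDerivAt.comp_hasDerivAt t (hz t)
    have h := (hre.mul hre).add (him.mul him)
    have heq : f = fun x => (z x).re * (z x).re + (z x).im * (z x).im := by
      funext x
      simp [hfdef, Complex.normSq_apply]
    rw [heq]
    have hFe : F' t = (v t).re * (z t).re + (z t).re * (v t).re
        + ((v t).im * (z t).im + (z t).im * (v t).im) := by
      simp [hF'def, Complex.mul_re]
      ring
    rw [hFe]
    exact h
  have hfb : 1 < f b := by nlinarith [Complex.sq_norm (z b), norm_nonneg (z b)]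
  have hf0 : f 0 ≤ 1 := by nlinarith [Complex.sq_norm (z 0), norm_nonneg (z 0)]
  -- first crossing
  set A : Set ℝ := Icc 0 b ∩ {t | f t ≤ 1} with hAdef
  have hA_closed : IsClosed A := isClosed_Icc.inter (isClosed_le hfc continuous_const)
  have hA_ne : A.Nonempty := ⟨0, ⟨le_rfl, hb⟩, hf0⟩
  have hA_bdd : BddAbove A := (bddAbove_Icc (a := (0:ℝ)) (b := b)).mono inter_subset_left
  set s := sSup A with hsdef
  have hsA : s ∈ A := hA_closed.csSup_mem hA_ne hA_bdd
  obtain ⟨⟨hs0, hsb⟩, hfs1'⟩ := hsA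
  have hfs1 : f s ≤ 1 := hfs1'
  have hsltb : s < b := lt_of_le_of_ne hsb (fun h => by rw [h] at hfs1; linarith)
  have key1 : ∀ x, s < x → x ≤ b → 1 < f x := by
    intro x h1 h2
    by_contra h
    push_neg at h
    exact absurd (le_csSup hA_bdd ⟨⟨le_trans hs0 h1.le, h2⟩, h⟩) (not_le.2 h1)
  have hfs : f s = 1 := by
    refine le_antisymm hfs1 ?_
    by_contra h
    push_neg at h
    have h1 : ∀ᶠ x in nhdsWithin s (Ioi s), f x < 1 :=
      ((hfc.tendsto s).eventually_lt_const h).filter_mono nhdsWithin_le_nhds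
    have h2 : Ioo s b ∈ nhdsWithin s (Ioi s) := Ioo_mem_nhdsGT_of_mem ⟨le_rfl, hsltb⟩
    obtain ⟨x, hx1, hx2⟩ := (h1.and h2).exists
    exact absurd hx1 (not_lt.2 (key1 x hx2.1 hx2.2.le).le)
  -- second level
  set B : Set ℝ := Icc s b ∩ {t | 2 ≤ f t} with hBdef
  set u := sInf (insert b B) with hudef
  have hins_closed : IsClosed (insert b B) := by
    rw [insert_eq]
    exact isClosed_singleton.union (isClosed_Icc.inter (isClosed_le continuous_const hfc))
  have hins_ne : (insert b B).Nonempty := ⟨b, mem_insert b B⟩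
  have hins_lb : ∀ x ∈ insert b B, s ≤ x := by
    intro x hx
    rcases hx with h | h
    · rw [h]; exact hsb
    · exact h.1.1
  have hins_bdd : BddBelow (insert b B) := ⟨s, hins_lb⟩
  have humem : u ∈ insert b B := hins_closed.csInf_mem hins_ne hins_bdd
  have hsu : s ≤ u := le_csInf hins_ne hins_lb
  have hub : u ≤ b := csInf_le hins_bdd (mem_insert b B)
  have hslt_u : s < u := by
    rcases lt_or_eq_of_le hsu with h | h
    · exact h
    · exfalso
      rcases humem with h' | h'
      · exact absurd (h.trans h') (ne_of_lt hsltb)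
      · have h2 : (2:ℝ) ≤ f u := h'.2
        have h3 : f s = 1 := hfs
        rw [h] at h3
        linarith
  have hfu1 : 1 < f u := key1 u hslt_u hub
  have hflt2 : ∀ x ∈ Ico s u, f x < 2 := by
    intro x hx
    by_contra h
    push_neg at h
    have hxB : x ∈ B := ⟨⟨hx.1, le_trans hx.2.le hub⟩, h⟩
    exact absurd (csInf_le hins_bdd (mem_insert_of_mem _ hxB)) (not_le.2 hx.2)
  -- bound on coefficients
  obtain ⟨M1, hM1⟩ := (isCompact_Icc (a := (0:ℝ)) (b := b)).exists_bound_of_continuousOn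
    hc1.continuousOn
  obtain ⟨M2, hM2⟩ := (isCompact_Icc (a := (0:ℝ)) (b := b)).exists_bound_of_continuousOn
    hc2.continuousOn
  set M := max M1 M2 with hMdef
  -- Gronwall
  have grw := le_gronwallBound_of_liminf_deriv_right_le
    (f := fun t => f t - 1) (f' := F') (δ := 0) (K := 16 * M) (ε := 0) (a := s) (b := u)
    ((hfc.sub continuous_const).continuousOn)
    (fun x _ r hr =>
      (((hf' x).sub_const 1).hasDerivWithinAt (s := Ici x)).liminf_right_slope_le hr)
    (by show f s - 1 ≤ 0; rw [hfs]; norm_num)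
    ?_ u (right_mem_Icc.2 hsu)
  · rw [gronwallBound_ε0_δ0] at grw
    have grw' : f u - 1 ≤ 0 := grw
    linarith
  · intro x hx
    have hx0 : 0 ≤ x := le_trans hs0 hx.1
    have hxb : x ≤ b := le_trans hx.2.le hub
    have h1x : 1 ≤ f x := by
      rcases lt_or_eq_of_le hx.1 with h | h
      · exact (key1 x h hxb).le
      · rw [← h, hfs]
    have h4x : f x ≤ 4 := by linarith [hflt2 x hx]
    have hMb1 : ‖c1 x‖ ≤ M := by
      have := hM1 x ⟨hx0, hxb⟩
      exact le_trans this (le_max_left _ _)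
    have hMb2 : ‖c2 x‖ ≤ M := by
      have := hM2 x ⟨hx0, hxb⟩
      exact le_trans this (le_max_right _ _)
    have hpt := riccati_pointwise (c0 x) (c1 x) (c2 x) (z x) M hMb1 hMb2
      (fun w hw => hineq w x hw hx0) h1x h4x
    show 2 * ((starRingEnd ℂ) (z x) * (c0 x + c1 x * z x + c2 x * (z x)^2)).re
      ≤ 16 * M * (Complex.normSq (z x) - 1) + 0
    linarith [hpt]
end

section
/- For the Ott–Antonsen equation for driven phase oscillators, z' = (−γ + i ω₀) z + W(t)/2 − conj(W(t)) z²/2 with γ ≥ 0, the quantity Re(conj(c0(t)) z + c1(t) + c2(t) z) equals −γ ≤ 0 for every z on the unit circle, hence the closed unit disc is forward invariant. -/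
open Complex Set

private lemma key_re (z w : ℂ) (γ ω₀ : ℝ) :
    2 * ((starRingEnd ℂ) z * ((-(γ : ℂ) + Complex.I * ω₀) * z + w / 2
      - (starRingEnd ℂ) w * z ^ 2 / 2)).re
    = -(2 * γ) * Complex.normSq z + (1 - Complex.normSq z) * ((starRingEnd ℂ) w * z).re := by
  simp [Complex.normSq_apply, Complex.mul_re, Complex.mul_im, Complex.add_re, Complex.add_im,
    Complex.sub_re, Complex.sub_im, Complex.div_re, Complex.div_im, Complex.I_re, Complex.I_im,
    Complex.conj_re, Complex.conj_im, Complex.ofReal_re, Complex.ofReal_im, pow_two,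
    Complex.neg_re, Complex.neg_im]
  ring

theorem ott_antonsen_oscillators_invariant
    (γ ω₀ : ℝ) (hγ : 0 ≤ γ) (W : ℝ → ℂ) (hW : Continuous W) :
    (∀ (w : ℂ) (t : ℝ), ‖w‖ = 1 →
      ((starRingEnd ℂ) (W t / 2) * w + (-(γ : ℂ) + Complex.I * ω₀)
        + (-(starRingEnd ℂ) (W t) / 2) * w).re = -γ) ∧
    (∀ z : ℝ → ℂ,
      (∀ t, HasDerivAt z ((-(γ : ℂ) + Complex.I * ω₀) * z t + W t / 2
        - (starRingEnd ℂ) (W t) * (z t) ^ 2 / 2) t) →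
      ‖z 0‖ ≤ 1 → ∀ t, 0 ≤ t → ‖z t‖ ≤ 1) := by
  constructor
  · intro w t hw
    simp [Complex.add_re, Complex.mul_re, Complex.div_re, Complex.div_im, Complex.conj_re,
      Complex.conj_im, Complex.I_re, Complex.I_im, Complex.ofReal_re, Complex.ofReal_im,
      Complex.neg_re, Complex.neg_im]
    ring
  · intro z hz h0 t ht
    set z' : ℝ → ℂ := fun s => (-(γ : ℂ) + Complex.I * ω₀) * z s + W s / 2
        - (starRingEnd ℂ) (W s) * (z s) ^ 2 / 2 with hz'def
    set u : ℝ → ℝ := fun s => Complex.normSq (z s) - 1 with hudef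
    set D : ℝ → ℝ := fun s => -(2 * γ) * Complex.normSq (z s)
        + (1 - Complex.normSq (z s)) * ((starRingEnd ℂ) (W s) * z s).re with hDdef
    have hcz : Continuous z := continuous_iff_continuousAt.2 fun s => (hz s).continuousAt
    have hu_cont : Continuous u := by
      have : Continuous fun s => Complex.normSq (z s) := Complex.continuous_normSq.comp hcz
      exact this.sub continuous_const
    have hD : ∀ s, HasDerivAt u (D s) s := by
      intro s
      have hre : HasDerivAt (fun t => (z t).re) ((z' s).re) s :=
        Complex.reCLM.hasFDerivAt.comp_hasDerivAt s (hz s)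
      have him : HasDerivAt (fun t => (z t).im) ((z' s).im) s :=
        Complex.imCLM.hasFDerivAt.comp_hasDerivAt s (hz s)
      have h1 : HasDerivAt (fun t => (z t).re * (z t).re + (z t).im * (z t).im - 1)
          ((z' s).re * (z s).re + (z s).re * (z' s).re
            + ((z' s).im * (z s).im + (z s).im * (z' s).im)) s :=
        ((hre.mul hre).add (him.mul him)).sub_const 1
      have hfun : u = fun t => (z t).re * (z t).re + (z t).im * (z t).im - 1 := by
        funext t; simp [hudef, Complex.normSq_apply]
      rw [hfun]
      convert h1 using 1
      have hk := key_re (z s) (W s) γ ω₀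
      rw [hDdef]
      simp only []
      rw [← hk, hz'def]
      simp [Complex.mul_re, Complex.conj_re, Complex.conj_im]
      ring
    -- reduce to normSq
    have h0' : u 0 ≤ 0 := by
      have : Complex.normSq (z 0) ≤ 1 := by
        have := Complex.sq_norm (z 0)
        nlinarith [norm_nonneg (z 0)]
      simpa [hudef] using this
    by_contra habs
    have hut : 0 < u t := by
      have h1 : 1 < ‖z t‖ := lt_of_not_ge habs
      have := Complex.sq_norm (z t)
      simp only [hudef]
      nlinarith
    have ht0 : 0 < t := by
      rcases lt_or_eq_of_le ht with h | h
      · exact h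
      · exfalso; rw [← h] at hut; linarith
    -- sup of good set
    set S : Set ℝ := Icc 0 t ∩ {s | u s ≤ 0} with hSdef
    have hS0 : (0 : ℝ) ∈ S := ⟨⟨le_refl 0, ht⟩, h0'⟩
    have hSne : S.Nonempty := ⟨0, hS0⟩
    have hSbdd : BddAbove S := ⟨t, fun x hx => hx.1.2⟩
    have hSclosed : IsClosed S := isClosed_Icc.inter (isClosed_le hu_cont continuous_const)
    set s₀ := sSup S with hs₀def
    have hs₀S : s₀ ∈ S := hSclosed.csSup_mem hSne hSbdd
    have hs₀0 : 0 ≤ s₀ := hs₀S.1.1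
    have hs₀le : u s₀ ≤ 0 := hs₀S.2
    have hs₀t : s₀ < t := lt_of_le_of_ne hs₀S.1.2 (by
      intro h; rw [h] at hs₀le; linarith)
    have hus₀ : u s₀ = 0 := by
      rcases lt_or_eq_of_le hs₀le with hlt | heq
      · exfalso
        have hopen : IsOpen {x | u x < 0} := isOpen_lt hu_cont continuous_const
        rcases Metric.isOpen_iff.1 hopen s₀ hlt with ⟨ε, hε, hball⟩
        set x := min t (s₀ + ε / 2) with hxdef
        have hxs₀ : s₀ < x := lt_min hs₀t (by linarith)
        have hxt : x ≤ t := min_le_left _ _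
        have hxball : x ∈ Metric.ball s₀ ε := by
          rw [Metric.mem_ball, Real.dist_eq, abs_of_pos (by linarith)]
          have : x ≤ s₀ + ε / 2 := min_le_right _ _
          linarith
        have hxS : x ∈ S := ⟨⟨by linarith, hxt⟩, Set.mem_setOf.2 (le_of_lt (Set.mem_setOf.1 (hball hxball)))⟩
        have := le_csSup hSbdd hxS
        linarith
      · exact heq
    have hupos : ∀ x ∈ Ioc s₀ t, 0 < u x := by
      intro x hx
      by_contra h
      have hxS : x ∈ S := ⟨⟨le_trans hs₀0 (le_of_lt hx.1), hx.2⟩, Set.mem_setOf.2 (le_of_not_gt h)⟩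
      have := le_csSup hSbdd hxS
      linarith [hx.1]
    -- bound
    obtain ⟨C, hC⟩ := (isCompact_Icc : IsCompact (Icc (0:ℝ) t)).exists_bound_of_continuousOn
      ((Continuous.mul (Complex.continuous_conj.comp hW) hcz).continuousOn)
    have hC0 : 0 ≤ C := le_trans (norm_nonneg _) (hC 0 ⟨le_refl 0, ht⟩)
    have key := le_gronwallBound_of_liminf_deriv_right_le (f := u) (f' := D)
      (δ := 0) (K := C) (ε := 0) (a := s₀) (b := t)
      hu_cont.continuousOn
      (fun x _ r hr => ((hD x).hasDerivWithinAt).liminf_right_slope_le hr)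
      (le_of_eq hus₀)
      (by
        intro x hx
        have hxI : x ∈ Icc (0:ℝ) t := ⟨le_trans hs₀0 hx.1, le_of_lt hx.2⟩
        have hRC : |((starRingEnd ℂ) (W x) * z x).re| ≤ C :=
          le_trans (Complex.abs_re_le_norm _) (hC x hxI)
        have hRC' := abs_le.1 hRC
        have hnn : 0 ≤ Complex.normSq (z x) := Complex.normSq_nonneg _
        have hux : 0 ≤ u x := by
          rcases eq_or_lt_of_le hx.1 with h | h
          · rw [← h, hus₀]
          · exact le_of_lt (hupos x ⟨h, le_of_lt hx.2⟩)
        have huval : Complex.normSq (z x) = u x + 1 := by simp [hudef]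
        rw [hDdef]
        simp only []
        rw [huval]
        nlinarith [mul_le_mul_of_nonneg_left hRC'.2 hux,
          mul_le_mul_of_nonneg_left (neg_le_of_abs_le hRC) hux])
      t ⟨le_of_lt hs₀t, le_refl t⟩
    rw [gronwallBound_ε0_δ0] at key
    linarith
end

section
/- A holomorphic map from the open unit disc to itself that extends continuously to the closed disc and maps the closed unit disc into the open unit disc has a unique fixed point in the open unit disc. -/
open Complex Metric

noncomputable def mob (a z : ℂ) : ℂ := (z - a) / (1 - (starRingEnd ℂ) a * z)

lemma mob_denom_ne {a z : ℂ} (ha : ‖a‖ < 1) (hz : ‖z‖ ≤ 1) :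
    1 - (starRingEnd ℂ) a * z ≠ 0 := by
  intro h
  have h1 : ‖(starRingEnd ℂ) a * z‖ < 1 := by
    rw [norm_mul, Complex.norm_conj]
    calc ‖a‖ * ‖z‖ ≤ ‖a‖ * 1 :=
      mul_le_mul_of_nonneg_left hz (norm_nonneg a)
    _ < 1 := by simpa using ha
  have : (starRingEnd ℂ) a * z = 1 := by linear_combination -h
  rw [this] at h1; simp at h1

lemma normSq_identity (a z : ℂ) :
    Complex.normSq (1 - (starRingEnd ℂ) a * z) - Complex.normSq (z - a)
      = (1 - Complex.normSq a) * (1 - Complex.normSq z) := by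
  simp only [Complex.normSq_apply, Complex.sub_re, Complex.sub_im, Complex.mul_re, Complex.mul_im,
    Complex.one_re, Complex.one_im, Complex.conj_re, Complex.conj_im]
  ring

lemma abs_sub_le_abs_denom {a z : ℂ} (ha : ‖a‖ ≤ 1) (hz : ‖z‖ ≤ 1) :
    ‖z - a‖ ≤ ‖1 - (starRingEnd ℂ) a * z‖ := by
  have h := normSq_identity a z
  have h1 : Complex.normSq a ≤ 1 := by
    rw [← Complex.sq_norm]; nlinarith [norm_nonneg a]
  have h2 : Complex.normSq z ≤ 1 := by
    rw [← Complex.sq_norm]; nlinarith [norm_nonneg z]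
  have h3 : Complex.normSq (z - a) ≤ Complex.normSq (1 - (starRingEnd ℂ) a * z) := by nlinarith
  rw [← Complex.sq_norm, ← Complex.sq_norm] at h3
  nlinarith [norm_nonneg (z - a), norm_nonneg (1 - (starRingEnd ℂ) a * z)]

lemma abs_mob_lt_one {a z : ℂ} (ha : ‖a‖ < 1) (hz : ‖z‖ < 1) :
    ‖mob a z‖ < 1 := by
  have hd := mob_denom_ne ha hz.le
  have hD : 0 < ‖1 - (starRingEnd ℂ) a * z‖ := norm_pos_iff.mpr hd
  rw [mob, norm_div, div_lt_one hD]
  have h := normSq_identity a z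
  have h1 : Complex.normSq a < 1 := by rw [← Complex.sq_norm]; nlinarith [norm_nonneg a]
  have h2 : Complex.normSq z < 1 := by rw [← Complex.sq_norm]; nlinarith [norm_nonneg z]
  have h3 : Complex.normSq (z - a) < Complex.normSq (1 - (starRingEnd ℂ) a * z) := by nlinarith
  rw [← Complex.sq_norm, ← Complex.sq_norm] at h3
  nlinarith [norm_nonneg (z - a), norm_nonneg (1 - (starRingEnd ℂ) a * z)]

lemma mob_mob {a z : ℂ} (ha : ‖a‖ < 1) (hz : ‖z‖ < 1) :
    mob (-a) (mob a z) = z := by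
  have h1 := mob_denom_ne ha hz.le
  have h4 : 1 - (starRingEnd ℂ) a * a ≠ 0 := mob_denom_ne ha ha.le
  have h5 : 1 - a * (starRingEnd ℂ) a ≠ 0 := by rwa [mul_comm]
  simp only [mob, map_neg, neg_mul, sub_neg_eq_add]
  rw [div_add' _ _ _ h1, mul_div_assoc', one_add_div h1, div_div_div_cancel_right₀ h1,
    div_eq_iff (by ring_nf; ring_nf at h4; exact h4)]
  ring

lemma mem_ball_iff_abs {z : ℂ} : z ∈ ball (0 : ℂ) 1 ↔ ‖z‖ < 1 := by
  rw [mem_ball_zero_iff]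

lemma mob_mapsTo {a : ℂ} (ha : ‖a‖ < 1) :
    Set.MapsTo (mob a) (ball (0 : ℂ) 1) (ball (0 : ℂ) 1) := fun z hz =>
  mem_ball_iff_abs.2 (abs_mob_lt_one ha (mem_ball_iff_abs.1 hz))

lemma mob_diff {a : ℂ} (ha : ‖a‖ < 1) :
    DifferentiableOn ℂ (mob a) (ball (0 : ℂ) 1) := by
  apply DifferentiableOn.div
  · exact (differentiable_id.sub_const a).differentiableOn
  · exact ((differentiable_const (1 : ℂ)).sub (differentiable_id.const_mul _)).differentiableOn
  · exact fun z hz => mob_denom_ne ha (mem_ball_iff_abs.1 hz).le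

lemma schwarz_pick {f : ℂ → ℂ} (hd : DifferentiableOn ℂ f (ball (0 : ℂ) 1))
    (hm : Set.MapsTo f (ball (0 : ℂ) 1) (ball (0 : ℂ) 1)) {z w : ℂ}
    (hz : z ∈ ball (0 : ℂ) 1) (hw : w ∈ ball (0 : ℂ) 1) :
    ‖mob (f w) (f z)‖ ≤ ‖mob w z‖ := by
  have haw : ‖w‖ < 1 := mem_ball_iff_abs.1 hw
  have hafw : ‖f w‖ < 1 := mem_ball_iff_abs.1 (hm hw)
  have hanw : ‖-w‖ < 1 := by simpa using haw
  set F := fun ζ => mob (f w) (f (mob (-w) ζ)) with hF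
  have hFd : DifferentiableOn ℂ F (ball (0 : ℂ) 1) :=
    ((mob_diff hafw).comp (hd.comp (mob_diff hanw) (mob_mapsTo hanw))
      ((hm.comp (mob_mapsTo hanw))))
  have hFm : Set.MapsTo F (ball (0 : ℂ) 1) (ball (0 : ℂ) 1) :=
    (mob_mapsTo hafw).comp (hm.comp (mob_mapsTo hanw))
  have hF0 : F 0 = 0 := by
    have : mob (-w) 0 = w := by simp [mob]
    simp [hF, this, mob]
  have hmem : ‖mob w z‖ < 1 := abs_mob_lt_one haw (mem_ball_iff_abs.1 hz)
  have key := Complex.norm_le_norm_of_mapsTo_ball_self hFd (hFm.mono_right ball_subset_closedBall) hF0 hmem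
  have : F (mob w z) = mob (f w) (f z) := by
    show mob (f w) (f (mob (-w) (mob w z))) = mob (f w) (f z)
    rw [mob_mob haw (mem_ball_iff_abs.1 hz)]
  rwa [this] at key

lemma mob_def (a z : ℂ) : mob a z = (z - a) / (1 - (starRingEnd ℂ) a * z) := rfl

lemma strict_contraction {f : ℂ → ℂ} (hd : DifferentiableOn ℂ f (ball (0 : ℂ) 1))
    {r : ℝ} (hr0 : 0 < r) (hr1 : r < 1)
    (hfr : ∀ ζ ∈ ball (0 : ℂ) 1, ‖f ζ‖ ≤ r) {z w : ℂ}
    (hz : z ∈ ball (0 : ℂ) 1) (hw : w ∈ ball (0 : ℂ) 1) :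
    ‖mob (f w) (f z)‖
      ≤ (1 + (1 - r) / 2 * r) / (1 + (1 - r) / 2) * ‖mob w z‖ := by
  set t : ℝ := (1 - r) / 2 with htdef
  have ht0 : 0 < t := by simp only [htdef]; linarith
  set T : ℂ := (t : ℂ) with hTdef
  set g : ℂ → ℂ := fun ζ => f ζ + T * (f ζ - f w) with hg
  have hgd : DifferentiableOn ℂ g (ball (0 : ℂ) 1) :=
    hd.add (((hd.sub (differentiableOn_const (f w))).const_mul T))
  have habsT : ‖T‖ = t := by
    rw [hTdef, Complex.norm_real, Real.norm_eq_abs, abs_of_pos ht0]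
  have hfw_le : ‖f w‖ ≤ r := hfr w hw
  have hgm : Set.MapsTo g (ball (0 : ℂ) 1) (ball (0 : ℂ) 1) := by
    intro ζ hζ
    rw [mem_ball_iff_abs]
    have h1 : ‖f ζ‖ ≤ r := hfr ζ hζ
    calc ‖f ζ + T * (f ζ - f w)‖
        ≤ ‖f ζ‖ + ‖T * (f ζ - f w)‖ := norm_add_le _ _
      _ = ‖f ζ‖ + t * ‖f ζ - f w‖ := by rw [norm_mul, habsT]
      _ ≤ r + t * (‖f ζ‖ + ‖f w‖) := by
          have h2 : ‖f ζ - f w‖ ≤ ‖f ζ‖ + ‖f w‖ := by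
            simpa using norm_sub_le (f ζ) (f w)
          nlinarith
      _ ≤ r + t * (r + r) := by nlinarith
      _ < 1 := by simp only [htdef]; nlinarith [sq_nonneg (1 - r)]
  have hgw : g w = f w := by simp [hg]
  have sp := schwarz_pick hgd hgm hz hw
  rw [hgw] at sp
  -- abbreviations
  set A := ‖f z - f w‖ with hA
  set D := ‖1 - (starRingEnd ℂ) (f w) * f z‖ with hD
  set ρ := ‖mob w z‖ with hρ
  have hfz_le : ‖f z‖ ≤ r := hfr z hz
  have hfw1 : ‖f w‖ < 1 := lt_of_le_of_lt hfw_le hr1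
  have hfz1 : ‖f z‖ < 1 := lt_of_le_of_lt hfz_le hr1
  have hDpos : 0 < D := norm_pos_iff.mpr (mob_denom_ne hfw1 hfz1.le)
  have hAD : A ≤ D := abs_sub_le_abs_denom (le_of_lt hfw1) (le_of_lt hfz1)
  have hρ0 : 0 ≤ ρ := norm_nonneg _
  -- compute mob (f w) (g z)
  have hgz : g z - f w = (1 + T) * (f z - f w) := by rw [hg]; ring
  have hden : 1 - (starRingEnd ℂ) (f w) * g z
      = (1 - (starRingEnd ℂ) (f w) * f z) - T * ((starRingEnd ℂ) (f w) * (f z - f w)) := by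
    rw [hg]; ring
  have hEle : ‖1 - (starRingEnd ℂ) (f w) * g z‖ ≤ D * (1 + t * r) := by
    rw [hden]
    calc ‖(1 - (starRingEnd ℂ) (f w) * f z) - T * ((starRingEnd ℂ) (f w) * (f z - f w))‖
        ≤ D + ‖T * ((starRingEnd ℂ) (f w) * (f z - f w))‖ := by
          have := norm_sub_le (1 - (starRingEnd ℂ) (f w) * f z)
            (T * ((starRingEnd ℂ) (f w) * (f z - f w)))
          simpa [hD] using this
      _ = D + t * (‖f w‖ * A) := by
          rw [norm_mul, norm_mul, habsT, Complex.norm_conj]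
      _ ≤ D * (1 + t * r) := by
          have hA0 : 0 ≤ A := norm_nonneg _
          have hfw0 : 0 ≤ ‖f w‖ := norm_nonneg _
          nlinarith [mul_le_mul_of_nonneg_left hfw_le ht0.le,
            mul_le_mul_of_nonneg_left hAD (mul_nonneg ht0.le hr0.le)]
  have habs1T : ‖1 + T‖ = 1 + t := by
    have : (1 : ℂ) + T = ((1 + t : ℝ) : ℂ) := by push_cast [hTdef]; ring
    rw [this, Complex.norm_real, Real.norm_eq_abs, abs_of_pos (by linarith)]
  have hmobgz : ‖mob (f w) (g z)‖
      = (1 + t) * A / ‖1 - (starRingEnd ℂ) (f w) * g z‖ := by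
    rw [mob_def, norm_div, hgz, norm_mul, habs1T]
  rw [hmobgz] at sp
  have hEpos : 0 < ‖1 - (starRingEnd ℂ) (f w) * g z‖ := by
    apply norm_pos_iff.mpr
    apply mob_denom_ne hfw1
    exact le_of_lt (mem_ball_iff_abs.1 (hgm hz))
  rw [div_le_iff₀ hEpos] at sp
  -- (1+t) * A ≤ ρ * E ≤ ρ * D (1+tr)
  have key : (1 + t) * A ≤ ρ * (D * (1 + t * r)) := by
    calc (1 + t) * A ≤ ρ * ‖1 - (starRingEnd ℂ) (f w) * g z‖ := sp
      _ ≤ ρ * (D * (1 + t * r)) := by nlinarith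
  have hmobf : ‖mob (f w) (f z)‖ = A / D := by
    rw [mob_def, norm_div]
  have ht1 : 0 < 1 + t := by linarith
  rw [hmobf, div_le_iff₀ hDpos, div_mul_eq_mul_div, div_mul_eq_mul_div, le_div_iff₀ ht1]
  nlinarith [key]


theorem holomorphic_strict_selfmap_unique_fixed_point
    (f : ℂ → ℂ)
    (hcont : ContinuousOn f (closedBall (0 : ℂ) 1))
    (hdiff : DifferentiableOn ℂ f (ball (0 : ℂ) 1))
    (hmap : ∀ z ∈ closedBall (0 : ℂ) 1, ‖f z‖ < 1) :
    ∃! z, z ∈ ball (0 : ℂ) 1 ∧ f z = z := by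
  -- uniform bound r < 1
  obtain ⟨x₀, hx₀, hmax⟩ := (isCompact_closedBall (0 : ℂ) 1).exists_isMaxOn
    ⟨0, by simp⟩ (continuous_norm.comp_continuousOn hcont)
  set r : ℝ := max (1 / 2) (‖f x₀‖) with hrdef
  have hr0 : 0 < r := lt_of_lt_of_le (by norm_num) (le_max_left _ _)
  have hr1 : r < 1 := max_lt (by norm_num) (hmap x₀ hx₀)
  have hfr_cb : ∀ z ∈ closedBall (0 : ℂ) 1, ‖f z‖ ≤ r :=
    fun z hz => le_trans (hmax hz) (le_max_right _ _)
  have hfr : ∀ z ∈ ball (0 : ℂ) 1, ‖f z‖ ≤ r :=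
    fun z hz => hfr_cb z (ball_subset_closedBall hz)
  have hm : Set.MapsTo f (ball (0 : ℂ) 1) (ball (0 : ℂ) 1) := fun z hz =>
    mem_ball_iff_abs.2 (hmap z (ball_subset_closedBall hz))
  set k : ℝ := (1 + (1 - r) / 2 * r) / (1 + (1 - r) / 2) with hkdef
  have ht0 : 0 < (1 - r) / 2 := by linarith
  have hk0 : 0 ≤ k := by positivity
  have hk1 : k < 1 := by
    rw [hkdef, div_lt_one (by linarith)]
    nlinarith
  have hcontr : ∀ z ∈ ball (0 : ℂ) 1, ∀ w ∈ ball (0 : ℂ) 1,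
      ‖mob (f w) (f z)‖ ≤ k * ‖mob w z‖ :=
    fun z hz w hw => strict_contraction hdiff hr0 hr1 hfr hz hw
  -- iteration
  set u : ℕ → ℂ := fun n => f^[n] 0 with hudef
  have hu_cb : ∀ n, u n ∈ closedBall (0 : ℂ) r := by
    intro n
    induction n with
    | zero => simpa [hudef] using hr0.le
    | succ n ih =>
      have : u (n + 1) = f (u n) := Function.iterate_succ_apply' f n 0
      rw [this, mem_closedBall_zero_iff]
      exact hfr_cb (u n) (closedBall_subset_closedBall hr1.le ih)
  have hu_ball : ∀ n, u n ∈ ball (0 : ℂ) 1 :=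
    fun n => closedBall_subset_ball hr1 (hu_cb n)
  have hu_succ : ∀ n, u (n + 1) = f (u n) := fun n => Function.iterate_succ_apply' f n 0
  set C : ℝ := ‖mob (u 0) (u 1)‖ with hCdef
  have hC0 : 0 ≤ C := norm_nonneg _
  have hstep : ∀ n, ‖mob (u n) (u (n + 1))‖ ≤ k ^ n * C := by
    intro n
    induction n with
    | zero => simp [hCdef]
    | succ n ih =>
      have h1 : ‖mob (u (n + 1)) (u (n + 2))‖
          ≤ k * ‖mob (u n) (u (n + 1))‖ := by
        have h0 := hcontr (u (n + 1)) (hu_ball (n + 1)) (u n) (hu_ball n)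
        rwa [← hu_succ n, ← hu_succ (n + 1)] at h0
      calc ‖mob (u (n + 1)) (u (n + 2))‖
          ≤ k * ‖mob (u n) (u (n + 1))‖ := h1
        _ ≤ k * (k ^ n * C) := mul_le_mul_of_nonneg_left ih hk0
        _ = k ^ (n + 1) * C := by ring
  have habs_le_one : ∀ n, ‖u n‖ ≤ 1 := by
    intro n
    have := hu_ball n
    exact (mem_ball_iff_abs.1 this).le
  have hdist : ∀ n, dist (u n) (u (n + 1)) ≤ 2 * C * k ^ n := by
    intro n
    have hden_ne : 1 - (starRingEnd ℂ) (u n) * u (n + 1) ≠ 0 :=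
      mob_denom_ne (mem_ball_iff_abs.1 (hu_ball n)) (habs_le_one (n + 1))
    have hnum : u (n + 1) - u n = mob (u n) (u (n + 1)) * (1 - (starRingEnd ℂ) (u n) * u (n + 1)) := by
      rw [mob]
      field_simp
      rw [mul_div_cancel_right₀ _ (by rwa [mul_comm] at hden_ne)]
    have hden_le : ‖1 - (starRingEnd ℂ) (u n) * u (n + 1)‖ ≤ 2 := by
      have h1 : ‖(starRingEnd ℂ) (u n) * u (n + 1)‖ ≤ 1 := by
        rw [norm_mul, Complex.norm_conj]
        exact mul_le_one₀ (habs_le_one n) (norm_nonneg _) (habs_le_one (n + 1))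
      have := norm_sub_le (1 : ℂ) ((starRingEnd ℂ) (u n) * u (n + 1))
      calc ‖1 - (starRingEnd ℂ) (u n) * u (n + 1)‖
          ≤ ‖1‖ + ‖(starRingEnd ℂ) (u n) * u (n + 1)‖ := this
        _ ≤ 2 := by rw [norm_one]; linarith
    rw [dist_comm, Complex.dist_eq, hnum, norm_mul]
    calc ‖mob (u n) (u (n + 1))‖ * ‖1 - (starRingEnd ℂ) (u n) * u (n + 1)‖
        ≤ (k ^ n * C) * 2 := by
          apply mul_le_mul (hstep n) hden_le (norm_nonneg _)
          positivity
      _ = 2 * C * k ^ n := by ring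
  have hcauchy : CauchySeq u := cauchySeq_of_le_geometric k (2 * C) hk1 hdist
  obtain ⟨p, hp⟩ := cauchySeq_tendsto_of_complete hcauchy
  have hp_cb : p ∈ closedBall (0 : ℂ) r :=
    isClosed_closedBall.mem_of_tendsto hp (Filter.Eventually.of_forall hu_cb)
  have hp_ball : p ∈ ball (0 : ℂ) 1 := closedBall_subset_ball hr1 hp_cb
  have hfp : f p = p := by
    have h1 : Filter.Tendsto (fun n => u (n + 1)) Filter.atTop (nhds p) :=
      hp.comp (Filter.tendsto_add_atTop_nat 1)
    have hc : ContinuousWithinAt f (closedBall (0 : ℂ) 1) p :=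
      hcont p (ball_subset_closedBall hp_ball)
    have h2 : Filter.Tendsto (fun n => f (u n)) Filter.atTop (nhds (f p)) := by
      apply hc.tendsto.comp
      apply tendsto_nhdsWithin_of_tendsto_nhds_of_eventually_within u hp
      exact Filter.Eventually.of_forall fun n =>
        closedBall_subset_closedBall hr1.le (hu_cb n)
    have h3 : (fun n => f (u n)) = fun n => u (n + 1) := by
      funext n; exact (hu_succ n).symm
    rw [h3] at h2
    exact tendsto_nhds_unique h2 h1
  refine ⟨p, ⟨hp_ball, hfp⟩, ?_⟩
  rintro q ⟨hq_ball, hfq⟩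
  have h := hcontr q hq_ball p hp_ball
  rw [hfp, hfq] at h
  have hc0 : ‖mob p q‖ = 0 := by
    have := norm_nonneg (mob p q)
    nlinarith
  have hmob0 : mob p q = 0 := norm_eq_zero.1 hc0
  have hden : 1 - (starRingEnd ℂ) p * q ≠ 0 :=
    mob_denom_ne (mem_ball_iff_abs.1 hp_ball) (mem_ball_iff_abs.1 hq_ball).le
  rw [mob, div_eq_zero_iff] at hmob0
  rcases hmob0 with h0 | h0
  · exact sub_eq_zero.1 h0
  · exact absurd h0 hden
end

section
/- If z : ℝ → ℂ solves the Riccati equation z' = c0(t) + c1(t) z + c2(t) z² where Re(conj(c0(t)) z + c1(t) + c2(t) z) < 0 for all z on the unit circle and all t, and |z(t₀)| = 1 for some t₀, then |z(t)| < 1 for all t > t₀. -/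
open Complex Set Filter Topology

theorem riccati_strict_enters_disc
    (c0 c1 c2 : ℝ → ℂ)
    (hc0 : Continuous c0) (hc1 : Continuous c1) (hc2 : Continuous c2)
    (hineq : ∀ (w : ℂ) (t : ℝ), ‖w‖ = 1 →
      ((starRingEnd ℂ) (c0 t) * w + c1 t + c2 t * w).re < 0)
    (z : ℝ → ℂ)
    (hz : ∀ t, HasDerivAt z (c0 t + c1 t * z t + c2 t * (z t) ^ 2) t)
    (t₀ : ℝ) (h0 : ‖z t₀‖ = 1) :
    ∀ t, t₀ < t → ‖z t‖ < 1 := by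
  set v : ℝ → ℂ := fun t => c0 t + c1 t * z t + c2 t * (z t) ^ 2 with hv
  set g : ℝ → ℝ := fun t => (z t).re * (z t).re + (z t).im * (z t).im with hgdef
  set d : ℝ → ℝ := fun t =>
    ((v t).re * (z t).re + (z t).re * (v t).re) +
      ((v t).im * (z t).im + (z t).im * (v t).im) with hddef
  have hcz : Continuous z := by
    rw [continuous_iff_continuousAt]
    exact fun t => (hz t).continuousAt
  have hcg : Continuous g := by
    exact ((Complex.continuous_re.comp hcz).mul (Complex.continuous_re.comp hcz)).add
      ((Complex.continuous_im.comp hcz).mul (Complex.continuous_im.comp hcz))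
  have hgd : ∀ t, HasDerivAt g (d t) t := by
    intro t
    have hre : HasDerivAt (fun t => (z t).re) ((v t).re) t :=
      Complex.reCLM.hasFDerivAt.comp_hasDerivAt t (hz t)
    have him : HasDerivAt (fun t => (z t).im) ((v t).im) t :=
      Complex.imCLM.hasFDerivAt.comp_hasDerivAt t (hz t)
    exact (hre.mul hre).add (him.mul him)
  -- derivative negative on the circle
  have hdneg : ∀ s, g s = 1 → d s < 0 := by
    intro s hs
    have habs : ‖z s‖ = 1 := by
      have : Complex.normSq (z s) = 1 := by
        rw [Complex.normSq_apply]; exact hs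
    -- abs = sqrt normSq
      have h2 := Complex.sq_norm (z s)
      nlinarith [norm_nonneg (z s)]
    have h := hineq (z s) s habs
    have h1 : (z s).re * (z s).re + (z s).im * (z s).im = 1 := hs
    have heq : d s = 2 * (((starRingEnd ℂ) (c0 s)) * z s + c1 s + c2 s * z s).re := by
      simp only [hddef, hv]
      simp only [Complex.add_re, Complex.add_im, Complex.mul_re, Complex.mul_im,
        Complex.conj_re, Complex.conj_im, pow_two]
      linear_combination (2 * (c1 s).re + 2 * (c2 s).re * (z s).re
        - 2 * (c2 s).im * (z s).im) * h1
    rw [heq]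
    linarith
  -- local behavior at points where g = 1
  have slopelem : ∀ s, g s = 1 →
      (∀ᶠ u in 𝓝[>] s, g u < 1) ∧ (∀ᶠ u in 𝓝[<] s, 1 < g u) := by
    intro s hs
    have hd := hgd s
    have hneg := hdneg s hs
    have hslope : Tendsto (slope g s) (𝓝[≠] s) (𝓝 (d s)) :=
      hasDerivAt_iff_tendsto_slope.mp hd
    have hev : ∀ᶠ u in 𝓝[≠] s, slope g s u < 0 :=
      hslope.eventually (tendsto_id.eventually_lt_const hneg)
    constructor
    · have h1 : ∀ᶠ u in 𝓝[>] s, slope g s u < 0 :=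
        hev.filter_mono (nhdsWithin_mono s fun x hx => ne_of_gt hx)
      filter_upwards [h1, self_mem_nhdsWithin] with u hu hu2
      rw [slope_def_field, hs] at hu
      have husub : (0:ℝ) < u - s := by simpa using sub_pos.mpr (show s < u from hu2)
      have := (div_neg_iff).mp hu
      rcases this with ⟨_, h⟩ | ⟨h, _⟩
      · linarith
      · linarith
    · have h1 : ∀ᶠ u in 𝓝[<] s, slope g s u < 0 :=
        hev.filter_mono (nhdsWithin_mono s fun x hx => ne_of_lt hx)
      filter_upwards [h1, self_mem_nhdsWithin] with u hu hu2
      rw [slope_def_field, hs] at hu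
      have husub : u - s < 0 := sub_neg.mpr hu2
      have := (div_neg_iff).mp hu
      rcases this with ⟨h, h'⟩ | ⟨h, _⟩
      · linarith
      · linarith
  have h0' : g t₀ = 1 := by
    have h2 := Complex.sq_norm (z t₀)
    rw [h0, Complex.normSq_apply] at h2
    simpa [hgdef] using h2.symm
  have main : ∀ t, t₀ < t → g t < 1 := by
    intro t₁ ht₁
    by_contra hge
    push_neg at hge
    obtain ⟨hr, _⟩ := slopelem t₀ h0'
    obtain ⟨u, hu, hsub⟩ := mem_nhdsGT_iff_exists_Ioc_subset.mp hr
    have hu1 : u < t₁ := by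
      by_contra h
      push_neg at h
      exact absurd (hsub ⟨ht₁, h⟩) (by simpa using hge)
    set K := {t | t ∈ Icc u t₁ ∧ 1 ≤ g t} with hK
    have hKc : IsClosed K :=
      (isClosed_Icc).inter (isClosed_le continuous_const hcg)
    have hKcpt : IsCompact K :=
      isCompact_Icc.of_isClosed_subset hKc fun x hx => hx.1
    have hKne : K.Nonempty := ⟨t₁, ⟨hu1.le, le_rfl⟩, hge⟩
    set s := sInf K with hsdef
    have hsK : s ∈ K := hKcpt.sInf_mem hKne
    have hus : u ≤ s := hsK.1.1
    have hts : t₀ < s := lt_of_lt_of_le hu hus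
    have hlt : ∀ x, t₀ < x → x < s → g x < 1 := by
      intro x hx1 hx2
      by_cases hxu : x ≤ u
      · exact hsub ⟨hx1, hxu⟩
      · push_neg at hxu
        by_contra hc
        push_neg at hc
        have hxK : x ∈ K := ⟨⟨hxu.le, by linarith [hsK.1.2]⟩, hc⟩
        exact absurd (csInf_le hKcpt.bddBelow hxK) (not_le.mpr hx2)
    have hgs_le : g s ≤ 1 := by
      have htend : Tendsto g (𝓝[<] s) (𝓝 (g s)) :=
        (hcg.tendsto s).mono_left nhdsWithin_le_nhds
      refine le_of_tendsto htend ?_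
      filter_upwards [Ioo_mem_nhdsLT_of_mem ⟨hts, le_rfl⟩] with x hx
      exact (hlt x hx.1 hx.2).le
    have hgs : g s = 1 := le_antisymm hgs_le hsK.2
    obtain ⟨_, hl⟩ := slopelem s hgs
    have : ∀ᶠ x in 𝓝[<] s, False := by
      filter_upwards [hl, Ioo_mem_nhdsLT_of_mem ⟨hts, le_rfl⟩] with x hx1 hx2
      exact absurd (hlt x hx2.1 hx2.2) (by linarith)
    obtain ⟨x, hx⟩ := this.exists
    exact hx
  intro t ht
  have hgt := main t ht
  have h2 := Complex.sq_norm (z t)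
  rw [Complex.normSq_apply] at h2
  have hgt' : (z t).re * (z t).re + (z t).im * (z t).im < 1 := hgt
  nlinarith [norm_nonneg (z t)]
end

section
/- Suppose z : ℝ → ℂ is a 2π-periodic solution of z' = c0(t) + c1(t) z + c2(t) z² with 2π-periodic continuous coefficients satisfying Re(conj(c0(t)) z + c1(t) + c2(t) z) < 0 for all |z| = 1 and all t. Then either |z(t)| < 1 for all t, or |z(t)| > 1 for all t; no periodic solution touches the unit circle. -/
open Complex Real

private lemma deriv_neg_right {f : ℝ → ℝ} {d t : ℝ} (h : HasDerivAt f d t) (hd : d < 0) :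
    ∀ᶠ s in nhdsWithin t (Set.Ioi t), f s < f t := by
  have h' := hasDerivAt_iff_tendsto_slope.mp h
  have h2 : ∀ᶠ s in nhdsWithin t {t}ᶜ, slope f t s < 0 := h' (Iio_mem_nhds hd)
  have h3 : ∀ᶠ s in nhdsWithin t (Set.Ioi t), slope f t s < 0 :=
    h2.filter_mono (nhdsWithin_mono t (by intro x hx; exact ne_of_gt hx))
  filter_upwards [h3, self_mem_nhdsWithin] with s hs hs'
  have hst : (0:ℝ) < s - t := sub_pos.mpr hs'
  rw [slope_def_field, div_lt_iff₀ hst] at hs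
  linarith

private lemma deriv_neg_left {f : ℝ → ℝ} {d t : ℝ} (h : HasDerivAt f d t) (hd : d < 0) :
    ∀ᶠ s in nhdsWithin t (Set.Iio t), f t < f s := by
  have h' := hasDerivAt_iff_tendsto_slope.mp h
  have h2 : ∀ᶠ s in nhdsWithin t {t}ᶜ, slope f t s < 0 := h' (Iio_mem_nhds hd)
  have h3 : ∀ᶠ s in nhdsWithin t (Set.Iio t), slope f t s < 0 :=
    h2.filter_mono (nhdsWithin_mono t (by intro x hx; exact ne_of_lt hx))
  filter_upwards [h3, self_mem_nhdsWithin] with s hs hs'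
  have hst : s - t < 0 := sub_neg.mpr hs'
  rw [slope_def_field] at hs
  have := (div_lt_iff_of_neg hst).mp hs
  linarith

theorem periodic_riccati_solution_avoids_circle
    (c0 c1 c2 : ℝ → ℂ)
    (hc0 : Continuous c0) (hc1 : Continuous c1) (hc2 : Continuous c2)
    (hper0 : ∀ t, c0 (t + 2 * π) = c0 t)
    (hper1 : ∀ t, c1 (t + 2 * π) = c1 t)
    (hper2 : ∀ t, c2 (t + 2 * π) = c2 t)
    (hineq : ∀ (w : ℂ) (t : ℝ), ‖w‖ = 1 →
      ((starRingEnd ℂ) (c0 t) * w + c1 t + c2 t * w).re < 0)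
    (z : ℝ → ℂ)
    (hz : ∀ t, HasDerivAt z (c0 t + c1 t * z t + c2 t * (z t) ^ 2) t)
    (hzper : ∀ t, z (t + 2 * π) = z t) :
    (∀ t, ‖z t‖ < 1) ∨ (∀ t, 1 < ‖z t‖) := by
  set v : ℝ → ℂ := fun t => c0 t + c1 t * z t + c2 t * (z t) ^ 2 with hv
  set f : ℝ → ℝ := fun t => Complex.normSq (z t) with hfdef
  set g : ℝ → ℝ := fun t => 2 * ((starRingEnd ℂ) (z t) * v t).re with hgdef
  have hre : ∀ t, HasDerivAt (fun s => (z s).re) (v t).re t := fun t =>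
    (Complex.reCLM.hasFDerivAt.comp_hasDerivAt t (hz t))
  have him : ∀ t, HasDerivAt (fun s => (z s).im) (v t).im t := fun t =>
    (Complex.imCLM.hasFDerivAt.comp_hasDerivAt t (hz t))
  have hf : ∀ t, HasDerivAt f (g t) t := by
    intro t
    have h : HasDerivAt (fun s => (z s).re * (z s).re + (z s).im * (z s).im) _ t :=
      ((hre t).mul (hre t)).add ((him t).mul (him t))
    have heq : (fun s => (z s).re * (z s).re + (z s).im * (z s).im) = f := by
      funext s; simp [hfdef, Complex.normSq_apply]
    rw [heq] at h
    convert h using 1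
    simp [hgdef, Complex.mul_re]
    ring
  have hzc : Continuous z := continuous_iff_continuousAt.mpr fun t => (hz t).continuousAt
  have hfc : Continuous f := Complex.continuous_normSq.comp hzc
  have hgneg : ∀ t, f t = 1 → g t < 0 := by
    intro t ht
    have ht' : Complex.normSq (z t) = 1 := ht
    have habs : ‖z t‖ = 1 := by
      have h1 : ‖z t‖ = Real.sqrt (Complex.normSq (z t)) := Complex.norm_def _
      rw [h1, ht', Real.sqrt_one]
    have hcw : (starRingEnd ℂ) (z t) * z t = 1 := by
      have h2 := Complex.normSq_eq_conj_mul_self (z := z t)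
      rw [← h2, ht']; norm_num
    have h1 : (starRingEnd ℂ) (z t) * v t =
        (starRingEnd ℂ) (z t) * c0 t + c1 t + c2 t * z t := by
      have : (starRingEnd ℂ) (z t) * v t =
          (starRingEnd ℂ) (z t) * c0 t + c1 t * ((starRingEnd ℂ) (z t) * z t)
            + c2 t * z t * ((starRingEnd ℂ) (z t) * z t) := by
        rw [hv]; ring
      rw [this, hcw]; ring
    have h2 : ((starRingEnd ℂ) (z t) * c0 t).re = ((starRingEnd ℂ) (c0 t) * z t).re := by
      simp [Complex.mul_re, Complex.conj_re, Complex.conj_im]; ring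
    have key := hineq (z t) t habs
    rw [hgdef]
    simp only [h1, Complex.add_re]
    rw [h2]
    simp only [Complex.add_re] at key
    linarith
  have hfp : ∀ t, f (t + 2 * π) = f t := fun t => by simp [hfdef, hzper t]
  by_contra hcon
  push_neg at hcon
  obtain ⟨⟨a, ha⟩, ⟨b, hb⟩⟩ := hcon
  -- find a point on the circle
  have hA : Continuous fun t => ‖z t‖ := continuous_norm.comp hzc
  have h1mem : (1:ℝ) ∈ Set.uIcc ‖z a‖ ‖z b‖ :=
    Set.mem_uIcc.mpr (Or.inr ⟨hb, ha⟩)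
  obtain ⟨t₀, _, ht₀⟩ := intermediate_value_uIcc hA.continuousOn h1mem
  have ht₀' : ‖z t₀‖ = 1 := ht₀
  have hft₀ : f t₀ = 1 := by
    show Complex.normSq (z t₀) = 1
    rw [← Complex.sq_norm, ht₀']; norm_num
  -- just to the right of t₀, f < 1
  have hr := deriv_neg_right (hf t₀) (hgneg t₀ hft₀)
  obtain ⟨u, hu, huS⟩ := mem_nhdsGT_iff_exists_Ioc_subset.mp hr
  have hπ := Real.pi_pos
  set u' := min u (t₀ + π) with hu'def
  have hu'1 : t₀ < u' := lt_min hu (by linarith)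
  have hu'2 : u' < t₀ + 2 * π := lt_of_le_of_lt (min_le_right _ _) (by linarith)
  have hfu' : f u' < 1 := by
    have := huS ⟨hu'1, min_le_left _ _⟩
    rwa [hft₀] at this
  -- the first return to the circle
  set K := Set.Icc u' (t₀ + 2 * π) ∩ {t | f t = 1} with hKdef
  have hKmem : t₀ + 2 * π ∈ K := ⟨⟨le_of_lt hu'2, le_refl _⟩, by
    show f (t₀ + 2 * π) = 1
    rw [hfp, hft₀]⟩
  have hKc : IsClosed K := isClosed_Icc.inter (isClosed_eq hfc continuous_const)
  have hKbdd : BddBelow K := ⟨u', fun x hx => hx.1.1⟩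
  set t₁ := sInf K with ht₁def
  have ht₁K : t₁ ∈ K := hKc.csInf_mem ⟨_, hKmem⟩ hKbdd
  have hft₁ : f t₁ = 1 := ht₁K.2
  have ht₁u' : u' < t₁ := by
    rcases lt_or_eq_of_le ht₁K.1.1 with h | h
    · exact h
    · rw [← h] at hft₁; rw [hft₁] at hfu'; linarith
  -- just to the left of t₁, f > 1
  have hl := deriv_neg_left (hf t₁) (hgneg t₁ hft₁)
  obtain ⟨l, hl1, hlS⟩ := mem_nhdsLT_iff_exists_Ico_subset.mp hl
  set s := max l ((u' + t₁) / 2) with hsdef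
  have hs_lt : s < t₁ := max_lt hl1 (by linarith)
  have hs_gt : u' < s := lt_of_lt_of_le (by linarith) (le_max_right _ _)
  have hfs : 1 < f s := by
    have := hlS ⟨le_max_left _ _, hs_lt⟩
    rwa [hft₁] at this
  -- IVT gives an earlier return, contradiction
  obtain ⟨w, hw1, hw2⟩ := intermediate_value_Icc (le_of_lt hs_gt) hfc.continuousOn
    ⟨le_of_lt hfu', le_of_lt hfs⟩
  have ht₁le : t₁ ≤ t₀ + 2 * π := csInf_le hKbdd hKmem
  have hwK : w ∈ K := ⟨⟨hw1.1, by linarith [hw1.2]⟩, hw2⟩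
  have := csInf_le hKbdd hwK
  linarith [hw1.2]
end
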